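/- In the topos of trees, the later modality ▶ has a fixed-point property: for every presheaf X and every morphism f : ▶X → X, there exists a unique morphism fix(f) : 1 → X such that f ∘ next ∘ fix(f) = fix(f), where next : X → ▶X is the canonical natural transformation given by the restriction maps of X. -/

import Mathlib

open CategoryTheory Opposite

/-- The underlying family of the later presheaf. -/
def laterObjFun (X : ℕᵒᵖ ⥤ Type) : ℕ → Type
  | 0 => PUnit
  | Nat.succ k => X.obj (op k)

/-- Restriction maps of the later presheaf. -/
def laterMapFun (X : ℕᵒᵖ ⥤ Type) : ∀ m n : ℕ, m ≤ n → laterObjFun X n → laterObjFun X m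
  | 0, _, _, _ => PUnit.unit
  | Nat.succ k, Nat.succ j, h, x => X.map (homOfLE (Nat.succ_le_succ_iff.mp h)).op x

/-- The later presheaf `▶X`, with `(▶X)(0) = {*}` and `(▶X)(n+1) = X(n)`. -/
def laterObj (X : ℕᵒᵖ ⥤ Type) : ℕᵒᵖ ⥤ Type where
  obj n := laterObjFun X n.unop
  map {n m} h := TypeCat.ofHom (laterMapFun X m.unop n.unop h.unop.le)
  map_id n := by
    ext x
    cases n with
    | op n =>
      cases n with
      | zero => cases x; rfl
      | succ k =>
        show X.map _ x = x
        have : (homOfLE (le_refl k)).op = 𝟙 (op k) := rfl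
        rw [this, X.map_id]; rfl
  map_comp {n m l} h h' := by
    ext x
    cases n with | op n =>
    cases m with | op m =>
    cases l with | op l =>
    cases l with
    | zero => rfl
    | succ lk =>
      cases m with
      | zero => exact absurd h'.unop.le (by simp only [Opposite.unop_op]; omega)
      | succ mk =>
        cases n with
        | zero => exact absurd h.unop.le (by simp only [Opposite.unop_op]; omega)
        | succ nk =>
          show X.map _ x = X.map _ (X.map _ x)
          exact FunctorToTypes.map_comp_apply X _ _ x

/-- The later functor `▶ : Psh(ω) ⥤ Psh(ω)`. -/
def later : (ℕᵒᵖ ⥤ Type) ⥤ (ℕᵒᵖ ⥤ Type) where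
  obj := laterObj
  map {X Y} f :=
    { app := fun n =>
        match n with
        | ⟨0⟩ => TypeCat.ofHom fun x => x
        | ⟨Nat.succ k⟩ => f.app (op k)
      naturality := by
        intro n m h
        ext x
        cases n with | op n =>
        cases m with | op m =>
        cases m with
        | zero => rfl
        | succ mk =>
          cases n with
          | zero => exact absurd h.unop.le (by simp only [Opposite.unop_op]; omega)
          | succ nk =>
            exact ConcreteCategory.congr_hom (f.naturality (homOfLE (Nat.succ_le_succ_iff.mp h.unop.le)).op) x }
  map_id X := by
    apply NatTrans.ext; funext n
    cases n with | op n => cases n <;> rfl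
  map_comp f g := by
    apply NatTrans.ext; funext n
    cases n with | op n => cases n <;> rfl

/-- The canonical natural transformation `next : X ⟶ ▶X`, given by the restriction maps. -/
def nextNat (X : ℕᵒᵖ ⥤ Type) : X ⟶ laterObj X where
  app n :=
    match n with
    | ⟨0⟩ => TypeCat.ofHom fun _ => PUnit.unit
    | ⟨Nat.succ k⟩ => X.map (homOfLE (Nat.le_succ k)).op
  naturality := by
    intro n m h
    ext x
    cases n with | op n =>
    cases m with | op m =>
    cases m with
    | zero => rfl
    | succ mk =>
      cases n with
      | zero => exact absurd h.unop.le (by simp only [Opposite.unop_op]; omega)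
      | succ nk =>
        show X.map _ (X.map _ x) = X.map _ (X.map _ x)
        rw [← CategoryTheory.types_comp_apply (X.map _) (X.map _), ← X.map_comp,
          ← CategoryTheory.types_comp_apply (X.map _) (X.map _), ← X.map_comp]
        rfl

/-- The fixed-point family. -/
def fixElt (X : ℕᵒᵖ ⥤ Type) (f : later.obj X ⟶ X) : ∀ n : ℕ, X.obj (op n)
  | 0 => f.app (op 0) PUnit.unit
  | Nat.succ k => f.app (op (k + 1)) (fixElt X f k)

lemma fixElt_step (X : ℕᵒᵖ ⥤ Type) (f : later.obj X ⟶ X) (n : ℕ) :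
    X.map (homOfLE (Nat.le_succ n)).op (fixElt X f (n + 1)) = fixElt X f n := by
  induction n with
  | zero =>
    have := ConcreteCategory.congr_hom (f.naturality (homOfLE (Nat.le_succ 0)).op) (fixElt X f 0)
    exact this.symm
  | succ k ih =>
    have h := ConcreteCategory.congr_hom (f.naturality (homOfLE (Nat.le_succ (k + 1))).op)
      (fixElt X f (k + 1))
    change _ = X.map _ (f.app (op (k + 2)) (fixElt X f (k + 1))) at h
    show X.map _ (f.app (op (k + 2)) (fixElt X f (k + 1))) = _
    rw [← h]
    show f.app (op (k + 1)) (X.map _ (fixElt X f (k + 1))) = _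
    have : (X.map (homOfLE (Nat.succ_le_succ_iff.mp (Nat.le_succ (k+1)))).op
        (fixElt X f (k + 1))) = fixElt X f k := ih
    rw [this]
    rfl

lemma fixElt_compat (X : ℕᵒᵖ ⥤ Type) (f : later.obj X ⟶ X) :
    ∀ (n m : ℕ) (h : m ≤ n), X.map (homOfLE h).op (fixElt X f n) = fixElt X f m := by
  intro n
  induction n with
  | zero =>
    intro m h
    obtain rfl : m = 0 := Nat.le_zero.mp h
    have heq : (homOfLE h).op = 𝟙 (op 0) := rfl
    rw [heq, X.map_id]
    rfl
  | succ k ih =>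
    intro m h
    rcases Nat.lt_or_ge m (k + 1) with hm | hm
    · have hm' : m ≤ k := Nat.lt_succ_iff.mp hm
      have : (homOfLE h).op = (homOfLE (Nat.le_succ k)).op ≫ (homOfLE hm').op := rfl
      rw [this, X.map_comp]
      show X.map _ (X.map _ _) = _
      rw [fixElt_step X f k, ih m hm']
    · obtain rfl : m = k + 1 := le_antisymm h hm
      have : (homOfLE h).op = 𝟙 (op (k + 1)) := rfl
      rw [this, X.map_id]; rfl

open CategoryTheory.Limits in
/-- Löb induction / the guarded fixed point theorem for global elements: for every
presheaf `X` on `ω` and every `f : ▶X ⟶ X` there is a unique global element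
`fix(f) : 1 ⟶ X` with `f ∘ next ∘ fix(f) = fix(f)`. -/
theorem later_fixed_point (X : ℕᵒᵖ ⥤ Type) (f : later.obj X ⟶ X) :
    ∃! g : ⊤_ (ℕᵒᵖ ⥤ Type) ⟶ X, g ≫ nextNat X ≫ f = g := by
  refine ⟨{ app := fun n => TypeCat.ofHom (fun _ => fixElt X f n.unop)
            naturality := by
              intro n m h
              ext x
              have : h = (homOfLE h.unop.le).op := Subsingleton.elim _ _
              rw [this]
              exact (fixElt_compat X f n.unop m.unop h.unop.le).symm }, ?_, ?_⟩
  · apply NatTrans.ext; funext n; ext x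
    cases n with | op n =>
    cases n with
    | zero => rfl
    | succ k =>
      show f.app (op (k + 1)) ((nextNat X).app (op (k + 1)) (fixElt X f (k + 1))) = _
      show f.app (op (k + 1)) (X.map _ (fixElt X f (k + 1))) = _
      rw [fixElt_step X f k]
      rfl
  · intro g' hg'
    apply NatTrans.ext; funext n; ext x
    cases n with | op n =>
    induction n with
    | zero =>
      have := ConcreteCategory.congr_hom (congrFun (congrArg NatTrans.app hg') (op 0)) x
      exact this.symm.trans rfl
    | succ k ih =>
      have h1 := ConcreteCategory.congr_hom (congrFun (congrArg NatTrans.app hg') (op (k + 1))) x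
      have h2 : (nextNat X).app (op (k + 1)) (g'.app (op (k + 1)) x)
          = fixElt X f k := by
        show X.map (homOfLE (Nat.le_succ k)).op (g'.app (op (k + 1)) x) = _
        have h3 := ConcreteCategory.congr_hom (g'.naturality (homOfLE (Nat.le_succ k)).op) x
        simp only [CategoryTheory.types_comp_apply] at h3
        rw [← h3]
        exact ih _
      calc g'.app (op (k + 1)) x
          = f.app (op (k + 1)) ((nextNat X).app (op (k + 1)) (g'.app (op (k + 1)) x)) :=
            h1.symm
        _ = f.app (op (k + 1)) (fixElt X f k) := by rw [h2]
        _ = fixElt X f (k + 1) := rfl
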